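/- Let K be a convex body in ℝ^n whose minimum volume circumscribed ellipsoid is the unit ball, with contact points u_1,…,u_k and multipliers λ_i > 0 satisfying ∑ λ_i u_i u_i^T = I_n and ∑ λ_i u_i = 0. Then for every unit vector d, max_i ⟨d, u_i⟩ + max_i ⟨−d, u_i⟩ ≥ 2/√n. -/

import Mathlib

open scoped RealInnerProductSpace
open Matrix

/-- Breadth bound: if the minimum volume circumscribed ellipsoid of a convex body `K` is the
unit ball, with contact points `u i` and multipliers `λ i` satisfying the John conditions,
then for every unit vector `d`, `max_i ⟨d, u i⟩ + max_i ⟨-d, u i⟩ ≥ 2/√n`. -/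
theorem contact_points_breadth_bound
    (n k : ℕ) (hn : 0 < n) (hk : 0 < k)
    (K : Set (EuclideanSpace ℝ (Fin n)))
    (hKconv : Convex ℝ K) (hKcomp : IsCompact K) (hKint : (interior K).Nonempty)
    (hKball : K ⊆ Metric.closedBall 0 1)
    (hmin : ∀ (X : Matrix (Fin n) (Fin n) ℝ) (c : EuclideanSpace ℝ (Fin n)), X.PosDef →
      K ⊆ {x | ⟪Matrix.toEuclideanLin X (x - c), x - c⟫ ≤ 1} → X.det ≤ 1)
    (u : Fin k → EuclideanSpace ℝ (Fin n)) (lam : Fin k → ℝ)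
    (hcontact : ∀ i, u i ∈ K ∧ ‖u i‖ = 1)
    (hlam : ∀ i, 0 < lam i)
    (hsum : ∑ i, lam i • Matrix.vecMulVec (u i) (u i) = (1 : Matrix (Fin n) (Fin n) ℝ))
    (hcen : ∑ i, lam i • u i = 0)
    (d : EuclideanSpace ℝ (Fin n)) (hd : ‖d‖ = 1) :
    2 / Real.sqrt n ≤
      (Finset.univ.sup' ⟨⟨0, hk⟩, Finset.mem_univ _⟩ fun i => ⟪d, u i⟫)
        + (Finset.univ.sup' ⟨⟨0, hk⟩, Finset.mem_univ _⟩ fun i => ⟪-d, u i⟫) := by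
  have hc : ∀ (x y : EuclideanSpace ℝ (Fin n)), ⟪x, y⟫ = ∑ a, x a * y a := by
    intro x y
    simp [PiLp.inner_apply, RCLike.inner_apply, mul_comm]
  set c : Fin k → ℝ := fun i => ⟪d, u i⟫ with hcdef
  have hM : ∀ a b, (∑ i, lam i * (u i a * u i b)) = if a = b then (1:ℝ) else 0 := by
    intro a b
    have h := congrFun (congrFun hsum a) b
    simpa [Matrix.sum_apply, Matrix.vecMulVec_apply, Matrix.one_apply, mul_assoc] using h
  have hu2 : ∀ i, ∑ a, u i a * u i a = 1 := by
    intro i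
    have h1 : ⟪u i, u i⟫ = 1 := by
      rw [real_inner_self_eq_norm_sq, (hcontact i).2]; norm_num
    rwa [hc] at h1
  have hd2 : ∑ a, d a * d a = 1 := by
    have h1 : ⟪d, d⟫ = 1 := by rw [real_inner_self_eq_norm_sq, hd]; norm_num
    rwa [hc] at h1
  have htr : ∑ i, lam i = (n : ℝ) := by
    calc ∑ i, lam i = ∑ i, ∑ a, lam i * (u i a * u i a) := by
          refine Finset.sum_congr rfl fun i _ => ?_
          rw [← Finset.mul_sum, hu2, mul_one]
      _ = ∑ a, ∑ i, lam i * (u i a * u i a) := Finset.sum_comm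
      _ = ∑ _a : Fin n, (1:ℝ) := by
          refine Finset.sum_congr rfl fun a _ => ?_
          rw [hM]; simp
      _ = n := by simp
  have hsum0 : ∑ i, lam i * c i = 0 := by
    have h1 : ∑ i, lam i * c i = ⟪d, ∑ i, lam i • u i⟫ := by
      rw [inner_sum]
      exact Finset.sum_congr rfl fun i _ => (real_inner_smul_right _ _ _).symm
    rw [h1, hcen, inner_zero_right]
  have hsum2 : ∑ i, lam i * (c i * c i) = 1 := by
    calc ∑ i, lam i * (c i * c i)
        = ∑ i, ∑ a, ∑ b, d a * d b * (lam i * (u i a * u i b)) := by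
          refine Finset.sum_congr rfl fun i _ => ?_
          have hcc : c i = ∑ a, d a * u i a := hc d (u i)
          rw [hcc, Finset.sum_mul_sum, Finset.mul_sum]
          refine Finset.sum_congr rfl fun a _ => ?_
          rw [Finset.mul_sum]
          exact Finset.sum_congr rfl fun b _ => by ring
      _ = ∑ a, ∑ b, d a * d b * (∑ i, lam i * (u i a * u i b)) := by
          rw [Finset.sum_comm]
          refine Finset.sum_congr rfl fun a _ => ?_
          rw [Finset.sum_comm]
          refine Finset.sum_congr rfl fun b _ => ?_
          exact (Finset.mul_sum _ _ _).symm
      _ = ∑ a, d a * d a := by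
          refine Finset.sum_congr rfl fun a _ => ?_
          simp [hM, mul_ite]
      _ = 1 := hd2
  set s := Finset.univ.sup' ⟨⟨0, hk⟩, Finset.mem_univ _⟩ (fun i => ⟪d, u i⟫) with hs
  set t := Finset.univ.sup' ⟨⟨0, hk⟩, Finset.mem_univ _⟩ (fun i => ⟪-d, u i⟫) with ht
  have hsc : ∀ i, c i ≤ s := fun i => Finset.le_sup' _ (Finset.mem_univ i)
  have htc : ∀ i, -c i ≤ t := fun i => by
    have h := Finset.le_sup' (fun i => ⟪-d, u i⟫) (Finset.mem_univ i)
    rw [← ht] at h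
    simpa [inner_neg_left, hcdef] using h
  have hk' : (Finset.univ : Finset (Fin k)).Nonempty := ⟨⟨0, hk⟩, Finset.mem_univ _⟩
  have hs0 : 0 ≤ s := by
    by_contra h
    push_neg at h
    have hneg : ∑ i, lam i * c i < 0 :=
      Finset.sum_neg (fun i _ => mul_neg_of_pos_of_neg (hlam i) (lt_of_le_of_lt (hsc i) h)) hk'
    linarith [hsum0]
  have ht0 : 0 ≤ t := by
    by_contra h
    push_neg at h
    have hpos : 0 < ∑ i, lam i * c i := by
      refine Finset.sum_pos (fun i _ => mul_pos (hlam i) ?_) hk'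
      have := htc i
      linarith
    linarith [hsum0]
  have hprod : 1 ≤ (n:ℝ) * (s * t) := by
    have hsum' : 0 ≤ ∑ i, lam i * ((s - c i) * (t + c i)) :=
      Finset.sum_nonneg fun i _ =>
        mul_nonneg (hlam i).le
          (mul_nonneg (sub_nonneg.2 (hsc i)) (by linarith [htc i]))
    have hexp : ∑ i, lam i * ((s - c i) * (t + c i))
        = s*t*(∑ i, lam i) + (s-t)*(∑ i, lam i * c i) - ∑ i, lam i * (c i * c i) := by
      rw [Finset.mul_sum, Finset.mul_sum, ← Finset.sum_add_distrib, ← Finset.sum_sub_distrib]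
      exact Finset.sum_congr rfl fun i _ => by ring
    rw [hexp, htr, hsum0, hsum2] at hsum'
    nlinarith [hsum']
  have hn' : (0:ℝ) < n := by exact_mod_cast hn
  have hr : 0 < Real.sqrt n := Real.sqrt_pos.2 hn'
  have hr2 : Real.sqrt n * Real.sqrt n = n := Real.mul_self_sqrt hn'.le
  rw [div_le_iff₀ hr]
  nlinarith [sq_nonneg ((s - t) * Real.sqrt n), hprod, mul_nonneg hs0 ht0,
    mul_nonneg (add_nonneg hs0 ht0) hr.le, sq_nonneg ((s + t) * Real.sqrt n - 2)]
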